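/- For every integer n ≥ 1, every p ∈ I_n, and every integer j ≥ 0, the widths and heights satisfy the self-similarity relations w_{p,j+n} = w_{p,n} · w_{p,j} and h_{p,j+n} = w_{p,n} · h_{p,j}. -/

import Mathlib

open Matrix

noncomputable section

/-- `M1 = [[1,1,0],[0,1,0],[0,0,1]]`. -/
def M1 : Matrix (Fin 3) (Fin 3) ℝ := !![1, 1, 0; 0, 1, 0; 0, 0, 1]

/-- `M2 = [[1,0,0],[1,1,1],[0,0,1]]`. -/
def M2 : Matrix (Fin 3) (Fin 3) ℝ := !![1, 0, 0; 1, 1, 1; 0, 0, 1]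

/-- `M3 = [[1,0,0],[0,1,0],[0,1,1]]`. -/
def M3 : Matrix (Fin 3) (Fin 3) ℝ := !![1, 0, 0; 0, 1, 0; 0, 1, 1]

/- A tuple `p = (p_n, p_n', q_n, …, p_1, p_1', q_1) ∈ ℕ₀^{3n}` is encoded by three
functions `P P' Q : Fin n → ℕ`, where the index `i : Fin n` corresponds to the
subscript `i + 1` (so `P ⟨0,_⟩ = p_1`, …, `P ⟨n-1,_⟩ = p_n`). -/

/-- The transition matrix `M_p = M1^{p_n} M3^{p_n'} M2^{q_n} ⋯ M1^{p_1} M3^{p_1'} M2^{q_1}`. -/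
def Mp (n : ℕ) (P P' Q : Fin n → ℕ) : Matrix (Fin 3) (Fin 3) ℝ :=
  ((List.finRange n).map fun i => M1 ^ P i.rev * M3 ^ P' i.rev * M2 ^ Q i.rev).prod

/-- Membership of the tuple `p` in `I_n`. -/
def memI (n : ℕ) (P P' Q : Fin n → ℕ) : Prop :=
  (∀ i, 0 < Q i) ∧ (∀ i, 0 < P i + P' i) ∧ (∃ j, 0 < P j) ∧ (∃ k, 0 < P' k)

/-- Finite continued fraction: `cf [a₁, …, a_m] x = 1/(a₁ + 1/(a₂ + ⋯ + 1/(a_m + x)))`. -/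
def cf (l : List ℕ) (x : ℝ) : ℝ := l.foldr (fun a y => 1 / (a + y)) x

/-- The (0-indexed) block index `k(j+1) - 1 = n - 1 - (j mod n)` used at step `j + 1`. -/
def blk (n : ℕ) (hn : 0 < n) (j : ℕ) : Fin n :=
  ⟨n - 1 - j % n, lt_of_le_of_lt (Nat.sub_le _ _) (Nat.sub_lt hn one_pos)⟩

/-- The sequence `(a₁, …, a_{2n}) = (p_n + p_n', q_n, …, p_1 + p_1', q_1)` as a list. -/
def aList (n : ℕ) (hn : 0 < n) (P P' Q : Fin n → ℕ) : List ℕ :=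
  (List.range n).flatMap fun i => [P (blk n hn i) + P' (blk n hn i), Q (blk n hn i)]

/-- `isH0 n hn P P' Q h0` says that `h0` is the number `h_{p,0}`: a real number in `(0,1)`
that is a fixed point of `x ↦ 1/(a₁ + 1/(a₂ + ⋯ + 1/(a_{2n} + x)))` (there is exactly one). -/
def isH0 (n : ℕ) (hn : 0 < n) (P P' Q : Fin n → ℕ) (h0 : ℝ) : Prop :=
  h0 ∈ Set.Ioo (0 : ℝ) 1 ∧ cf (aList n hn P P' Q) h0 = h0

/-- The pair `(w_{p,j}, h_{p,j})`, with `w_{p,0} = 1`, `h_{p,0} = h0`, and for `j ≥ 1`: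
`w_{p,j} = w_{p,j-1} − (p_{k(j)} + p'_{k(j)}) h_{p,j-1}`, `h_{p,j} = h_{p,j-1} − q_{k(j)} w_{p,j}`. -/
def wh (n : ℕ) (hn : 0 < n) (P P' Q : Fin n → ℕ) (h0 : ℝ) : ℕ → ℝ × ℝ
  | 0 => (1, h0)
  | j + 1 =>
    let prev := wh n hn P P' Q h0 j
    let b := blk n hn j
    let w := prev.1 - ((P b : ℝ) + (P' b : ℝ)) * prev.2
    (w, prev.2 - (Q b : ℝ) * w)

/-- The width `w_{p,j}`. -/
def wseq (n : ℕ) (hn : 0 < n) (P P' Q : Fin n → ℕ) (h0 : ℝ) (j : ℕ) : ℝ :=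
  (wh n hn P P' Q h0 j).1

/-- The height `h_{p,j}`. -/
def hseq (n : ℕ) (hn : 0 < n) (P P' Q : Fin n → ℕ) (h0 : ℝ) (j : ℕ) : ℝ :=
  (wh n hn P P' Q h0 j).2

/-- The split ratio `s_p = Σ_{i=0}^∞ p_{k(i+1)} h_{p,i}`. -/
def splitRatio (n : ℕ) (hn : 0 < n) (P P' Q : Fin n → ℕ) (h0 : ℝ) : ℝ :=
  ∑' i : ℕ, (P (blk n hn i) : ℝ) * hseq n hn P P' Q h0 i

/-- The reindexing realizing the shift `T`: the tuple `T(p)` is given by the functions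
`P ∘ shiftIdx n hn`, `P' ∘ shiftIdx n hn`, `Q ∘ shiftIdx n hn`. -/
def shiftIdx (n : ℕ) (hn : 0 < n) (i : Fin n) : Fin n :=
  ⟨(i.val + (n - 1)) % n, Nat.mod_lt _ hn⟩


lemma cf_nil (x : ℝ) : cf [] x = x := rfl
lemma cf_cons (a : ℕ) (l : List ℕ) (x : ℝ) : cf (a :: l) x = 1 / (a + cf l x) := rfl

lemma cf_mem_Ioo {l : List ℕ} {x : ℝ} (hx : x ∈ Set.Ioo (0:ℝ) 1)
    (hl : ∀ a ∈ l, 1 ≤ a) : cf l x ∈ Set.Ioo (0:ℝ) 1 := by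
  induction l with
  | nil => exact hx
  | cons a l ih =>
    have ha : (1:ℝ) ≤ a := by exact_mod_cast hl a List.mem_cons_self
    have h := ih (fun b hb => hl b (List.mem_cons_of_mem _ hb))
    rw [cf_cons]
    constructor
    · apply div_pos one_pos; linarith [h.1]
    · rw [div_lt_one (by linarith [h.1])]; linarith [h.1]
section Aux

variable (n : ℕ) (hn : 0 < n) (P P' Q : Fin n → ℕ) (h0 : ℝ)

/-- The two entries of block `i`. -/
def gblk (i : ℕ) : List ℕ := [P (blk n hn i) + P' (blk n hn i), Q (blk n hn i)]

/-- List of the last `m` blocks (blocks `n-m, …, n-1`). -/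
def fList : ℕ → List ℕ
  | 0 => []
  | m + 1 => gblk n hn P P' Q (n - (m+1)) ++ fList m

lemma fList_eq : ∀ m, m ≤ n →
    fList n hn P P' Q m = (List.range' (n - m) m).flatMap (gblk n hn P P' Q) := by
  intro m
  induction m with
  | zero => intro _; rfl
  | succ m ih =>
    intro hm
    have h1 : n - m = (n - (m+1)) + 1 := by omega
    rw [fList, ih (by omega), h1, List.range'_succ, List.flatMap_cons]

lemma fList_n : fList n hn P P' Q n = aList n hn P P' Q := by
  rw [fList_eq n hn P P' Q n le_rfl, Nat.sub_self, ← List.range_eq_range']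
  rfl

lemma fList_mem (hI : memI n P P' Q) : ∀ m, ∀ a ∈ fList n hn P P' Q m, 1 ≤ a := by
  intro m
  induction m with
  | zero => intro a ha; simp [fList] at ha
  | succ m ih =>
    intro a ha
    rw [fList, List.mem_append] at ha
    rcases ha with ha | ha
    · simp only [gblk, List.mem_cons, List.not_mem_nil, or_false] at ha
      rcases ha with rfl | rfl
      · exact hI.2.1 _
      · exact hI.1 _
    · exact ih a ha

lemma key (hI : memI n P P' Q) (hh0 : isH0 n hn P P' Q h0) :
    ∀ j, j ≤ n → 0 < (wh n hn P P' Q h0 j).1 ∧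
      (wh n hn P P' Q h0 j).2 = cf (fList n hn P P' Q (n - j)) h0 * (wh n hn P P' Q h0 j).1 := by
  intro j
  induction j with
  | zero =>
    intro _
    refine ⟨one_pos, ?_⟩
    simp only [wh, Nat.sub_zero, fList_n, hh0.2, mul_one]
  | succ j ih =>
    intro hj
    obtain ⟨hw, hh⟩ := ih (by omega)
    set w := (wh n hn P P' Q h0 j).1 with hwdef
    set h := (wh n hn P P' Q h0 j).2 with hhdef
    set b := blk n hn j with hbdef
    have hA : (1:ℝ) ≤ (P b : ℝ) + (P' b : ℝ) := by
      have := hI.2.1 b; push_cast [← Nat.cast_add]; exact_mod_cast this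
    have hB : (1:ℝ) ≤ (Q b : ℝ) := by exact_mod_cast hI.1 b
    set t := cf (fList n hn P P' Q (n - (j+1))) h0 with htdef
    have ht : t ∈ Set.Ioo (0:ℝ) 1 :=
      cf_mem_Ioo hh0.1 (fList_mem n hn P P' Q hI _)
    -- rewrite cf (fList (n - j)) via the block decomposition
    have hnj : n - j = (n - (j+1)) + 1 := by omega
    have hjj : n - ((n - (j+1)) + 1) = j := by omega
    have hcf : cf (fList n hn P P' Q (n - j)) h0
        = 1 / (((P b : ℝ) + (P' b : ℝ)) + 1 / ((Q b : ℝ) + t)) := by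
      rw [hnj]
      show cf (gblk n hn P P' Q (n - ((n - (j+1)) + 1)) ++ fList n hn P P' Q (n - (j+1))) h0 = _
      rw [hjj]
      simp only [gblk, List.cons_append, List.nil_append, cf_cons, ← htdef, ← hbdef]
      push_cast
      ring_nf
    have hBt : (0:ℝ) < (Q b : ℝ) + t := by linarith [ht.1]
    have hAs : (0:ℝ) < ((P b : ℝ) + (P' b : ℝ)) + 1 / ((Q b : ℝ) + t) := by
      have : (0:ℝ) < 1 / ((Q b : ℝ) + t) := by positivity
      linarith
    rw [hcf] at hh
    have hwsucc : (wh n hn P P' Q h0 (j+1)).1 = w - ((P b : ℝ) + (P' b : ℝ)) * h := rfl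
    have hhsucc : (wh n hn P P' Q h0 (j+1)).2
        = h - (Q b : ℝ) * (w - ((P b : ℝ) + (P' b : ℝ)) * h) := rfl
    have hwpos : 0 < w - ((P b : ℝ) + (P' b : ℝ)) * h := by
      rw [hh]
      have : w - ((P b : ℝ) + (P' b : ℝ)) *
          (1 / (((P b : ℝ) + (P' b : ℝ)) + 1 / ((Q b : ℝ) + t)) * w)
          = w * (1 / ((Q b : ℝ) + t)) / (((P b : ℝ) + (P' b : ℝ)) + 1 / ((Q b : ℝ) + t)) := by
        field_simp
        ring
      rw [this]
      positivity
    refine ⟨by rw [hwsucc]; exact hwpos, ?_⟩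
    rw [hwsucc, hhsucc, hh]
    have h1 : (Q b:ℝ) + t ≠ 0 := ne_of_gt hBt
    have h2 : ((P b : ℝ) + (P' b : ℝ)) + 1 / ((Q b : ℝ) + t) ≠ 0 := ne_of_gt hAs
    field_simp
    ring

lemma blk_add (j : ℕ) : blk n hn (j + n) = blk n hn j := by
  apply Fin.ext
  simp [blk, Nat.add_mod_right]

lemma wh_shift (hI : memI n P P' Q) (hh0 : isH0 n hn P P' Q h0) :
    ∀ j, (wh n hn P P' Q h0 (j + n)).1
          = (wh n hn P P' Q h0 n).1 * (wh n hn P P' Q h0 j).1 ∧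
        (wh n hn P P' Q h0 (j + n)).2
          = (wh n hn P P' Q h0 n).1 * (wh n hn P P' Q h0 j).2 := by
  intro j
  induction j with
  | zero =>
    have hk := key n hn P P' Q h0 hI hh0 n le_rfl
    refine ⟨by simp [wh], ?_⟩
    have : (wh n hn P P' Q h0 0).2 = h0 := rfl
    rw [Nat.zero_add, this, hk.2, Nat.sub_self]
    simp only [fList, cf_nil]
    ring
  | succ j ih =>
    have e : j + 1 + n = (j + n) + 1 := by omega
    constructor
    · rw [e]
      show (wh n hn P P' Q h0 (j+n)).1
          - ((P (blk n hn (j+n)) : ℝ) + (P' (blk n hn (j+n)) : ℝ)) * (wh n hn P P' Q h0 (j+n)).2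
          = _ * ((wh n hn P P' Q h0 j).1
          - ((P (blk n hn j) : ℝ) + (P' (blk n hn j) : ℝ)) * (wh n hn P P' Q h0 j).2)
      rw [blk_add, ih.1, ih.2]; ring
    · rw [e]
      show (wh n hn P P' Q h0 (j+n)).2 - (Q (blk n hn (j+n)) : ℝ) *
          ((wh n hn P P' Q h0 (j+n)).1
          - ((P (blk n hn (j+n)) : ℝ) + (P' (blk n hn (j+n)) : ℝ)) * (wh n hn P P' Q h0 (j+n)).2)
          = _ * ((wh n hn P P' Q h0 j).2 - (Q (blk n hn j) : ℝ) *
          ((wh n hn P P' Q h0 j).1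
          - ((P (blk n hn j) : ℝ) + (P' (blk n hn j) : ℝ)) * (wh n hn P P' Q h0 j).2))
      rw [blk_add, ih.1, ih.2]; ring

end Aux

/-- self-similarity: `w_{p,j+n} = w_{p,n} · w_{p,j}` and
`h_{p,j+n} = w_{p,n} · h_{p,j}` for all `j ≥ 0`. -/
theorem stmt5 (n : ℕ) (hn : 0 < n) (P P' Q : Fin n → ℕ) (hI : memI n P P' Q)
    (h0 : ℝ) (hh0 : isH0 n hn P P' Q h0) :
    ∀ j : ℕ,
      wseq n hn P P' Q h0 (j + n) = wseq n hn P P' Q h0 n * wseq n hn P P' Q h0 j ∧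
      hseq n hn P P' Q h0 (j + n) = wseq n hn P P' Q h0 n * hseq n hn P P' Q h0 j := by
  intro j
  exact wh_shift n hn P P' Q h0 hI hh0 j
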